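/- Let G be a semi-Markovian causal graph with observed variables V, let 𝔸 be a finite collection of subsets of V, let X and Y be disjoint subsets of V, and let (Y₁, Y₂) be a directed edge of G with Y₁, Y₂ ∈ Y. Let G′ be the graph obtained from G by removing the edge (Y₁, Y₂). If the causal effect of X on Y is not g-identifiable from (𝔸, G′), then the causal effect of X on Y ∖ {Y₁} is not g-identifiable from (𝔸, G). -/

import Mathlib

open scoped Classical

/-- A semi-Markovian causal graph: a DAG over a finite vertex set partitioned into
observed (`obs`) and unobserved (`unobs`) variables, where every unobserved variable
has no parents and exactly two (distinct, observed) children. -/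
structure CausalGraph (ν : Type) [Fintype ν] [DecidableEq ν] where
  obs : Finset ν
  unobs : Finset ν
  disj : Disjoint obs unobs
  E : ν → ν → Prop
  edge_mem : ∀ x y, E x y → x ∈ obs ∪ unobs ∧ y ∈ obs ∪ unobs
  acyclic : ∀ x, ¬ Relation.TransGen E x x
  unobs_no_parent : ∀ u ∈ unobs, ∀ w, ¬ E w u
  unobs_two_children : ∀ u ∈ unobs,
    ∃ a b, a ≠ b ∧ a ∈ obs ∧ b ∈ obs ∧ (∀ w, E u w ↔ w = a ∨ w = b)

namespace CausalGraph

variable {ν : Type} [Fintype ν] [DecidableEq ν]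

def verts (G : CausalGraph ν) : Finset ν := G.obs ∪ G.unobs

/-- A structural equation model over the causal graph `G`: finite nonempty domains
(encoded as finite sets of naturals), a pmf for each unobserved variable, and a
conditional pmf (given an assignment to the parents) for each observed variable. -/
structure SEM (G : CausalGraph ν) where
  dom : ν → Finset ℕ
  dom_ne : ∀ x, (dom x).Nonempty
  pU : ν → ℕ → ℝ
  pU_nonneg : ∀ u n, 0 ≤ pU u n
  pU_sum : ∀ u ∈ G.unobs, ∑ n ∈ dom u, pU u n = 1
  pO : ν → ℕ → (ν → ℕ) → ℝ
  pO_nonneg : ∀ x n pa, 0 ≤ pO x n pa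
  pO_sum : ∀ x ∈ G.obs, ∀ pa : ν → ℕ, ∑ n ∈ dom x, pO x n pa = 1
  pO_par : ∀ x n (pa pa' : ν → ℕ), (∀ p, G.E p x → pa p = pa' p) → pO x n pa = pO x n pa'

namespace SEM

variable {G : CausalGraph ν}

/-- Full assignments: all variables of `G` get values in their domains
(non-vertices are pinned to `0`). -/
noncomputable def fullAssign (M : SEM G) : Finset (ν → ℕ) :=
  Fintype.piFinset (fun x => if x ∈ G.verts then M.dom x else {0})

/-- Observed assignments `dom(V)`: observed variables get values in their domains
(all other coordinates are pinned to `0`). -/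
noncomputable def obsAssign (M : SEM G) : Finset (ν → ℕ) :=
  Fintype.piFinset (fun x => if x ∈ G.obs then M.dom x else {0})

/-- `Q^M[S](v) = Σ_u Π_{X ∈ S} P(x | pa_G(X)) Π_{U} P(u)`. -/
noncomputable def Q (M : SEM G) (S : Finset ν) (v : ν → ℕ) : ℝ :=
  ∑ w ∈ M.fullAssign.filter (fun w => ∀ x ∈ G.obs, w x = v x),
    (∏ x ∈ S, M.pO x (w x) w) * ∏ u ∈ G.unobs, M.pU u (w u)

/-- The observational distribution `P^M(v) = Q^M[V](v)`. -/
noncomputable def P (M : SEM G) (v : ν → ℕ) : ℝ := M.Q G.obs v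

/-- Post-interventional probability `P^M_x(y)`: sum of `Q^M[V∖X]` over all observed
realizations consistent with `x` on `X` and `y` on `Y`. -/
noncomputable def Px (M : SEM G) (X : Finset ν) (x : ν → ℕ) (Y : Finset ν) (y : ν → ℕ) : ℝ :=
  ∑ v ∈ M.obsAssign.filter (fun v => (∀ i ∈ X, v i = x i) ∧ (∀ i ∈ Y, v i = y i)),
    M.Q (G.obs \ X) v

/-- `M ∈ 𝕄⁺(G)`: strictly positive observational distribution. -/
def positive (M : SEM G) : Prop := ∀ v ∈ M.obsAssign, 0 < M.P v

end SEM

/-- The causal effect of `X` on `Y` is identifiable from `G`. -/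
def Identifiable (G : CausalGraph ν) (X Y : Finset ν) : Prop :=
  ∀ M₁ M₂ : SEM G, M₁.positive → M₂.positive →
    (∀ i ∈ G.obs, M₁.dom i = M₂.dom i) →
    (∀ v ∈ M₁.obsAssign, M₁.P v = M₂.P v) →
    ∀ x y : ν → ℕ, (∀ i ∈ X, x i ∈ M₁.dom i) → (∀ i ∈ Y, y i ∈ M₁.dom i) →
      M₁.Px X x Y y = M₂.Px X x Y y

/-- `Q[S]` is identifiable from `G`. -/
def QIdentifiable (G : CausalGraph ν) (S : Finset ν) : Prop :=
  Identifiable G (G.obs \ S) S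

/-- The causal effect of `X` on `Y` is g-identifiable from `(𝔸, G)`. -/
def GIdentifiable (G : CausalGraph ν) (𝔸 : Finset (Finset ν)) (X Y : Finset ν) : Prop :=
  ∀ M₁ M₂ : SEM G, M₁.positive → M₂.positive →
    (∀ i ∈ G.obs, M₁.dom i = M₂.dom i) →
    (∀ A ∈ 𝔸, ∀ v ∈ M₁.obsAssign, M₁.Q A v = M₂.Q A v) →
    ∀ x y : ν → ℕ, (∀ i ∈ X, x i ∈ M₁.dom i) → (∀ i ∈ Y, y i ∈ M₁.dom i) →
      M₁.Px X x Y y = M₂.Px X x Y y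

/-- `Q[S]` is g-identifiable from `(𝔸, G)`. -/
def QGIdentifiable (G : CausalGraph ν) (𝔸 : Finset (Finset ν)) (S : Finset ν) : Prop :=
  GIdentifiable G 𝔸 (G.obs \ S) S

/-- Bidirected edge of `G_X` between `a` and `b`: distinct members of `X` sharing an
unobserved parent (whose two children then necessarily both lie in `X`). -/
def biEdge (G : CausalGraph ν) (X : Finset ν) (a b : ν) : Prop :=
  a ≠ b ∧ a ∈ X ∧ b ∈ X ∧ ∃ u ∈ G.unobs, G.E u a ∧ G.E u b

/-- `X` is a single c-component of `G`. -/
def SingleC (G : CausalGraph ν) (X : Finset ν) : Prop :=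
  X.Nonempty ∧ ∀ a ∈ X, ∀ b ∈ X, Relation.ReflTransGen (G.biEdge X) a b

/-- The c-components of `S`: connected components of the bidirected part of `G_S`. -/
noncomputable def cComponents (G : CausalGraph ν) (S : Finset ν) : Finset (Finset ν) :=
  S.image (fun a => S.filter (fun b => Relation.ReflTransGen (G.biEdge S) a b))

/-- Directed edge of `G_X` (both endpoints in `X`). -/
def dirEdgeIn (G : CausalGraph ν) (X : Finset ν) (a b : ν) : Prop :=
  a ∈ X ∧ b ∈ X ∧ G.E a b

/-- `Anc_Y(G_X)`: members of `X` having a directed path in `G_X` to some member of `Y`. -/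
noncomputable def ancIn (G : CausalGraph ν) (X Y : Finset ν) : Finset ν :=
  X.filter (fun a => ∃ y ∈ Y, Relation.ReflTransGen (G.dirEdgeIn X) a y)

/-- Unobserved vertices of the induced subgraph `G[A]`: unobserved vertices of `G`
both of whose children lie in `A`. -/
noncomputable def inducedUnobs (G : CausalGraph ν) (A : Finset ν) : Finset ν :=
  G.unobs.filter (fun u => ∀ w, G.E u w → w ∈ A)

/-- The induced subgraph `G[A]`. -/
noncomputable def induced (G : CausalGraph ν) (A : Finset ν) : CausalGraph ν where
  obs := A ∩ G.obs
  unobs := G.inducedUnobs A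
  disj := G.disj.mono Finset.inter_subset_right (Finset.filter_subset _ _)
  E x y := G.E x y ∧ x ∈ (A ∩ G.obs) ∪ G.inducedUnobs A ∧ y ∈ (A ∩ G.obs) ∪ G.inducedUnobs A
  edge_mem := fun x y h => ⟨h.2.1, h.2.2⟩
  acyclic := fun x h => G.acyclic x (by
    have key : ∀ a b, Relation.TransGen
        (fun x y => G.E x y ∧ x ∈ (A ∩ G.obs) ∪ G.inducedUnobs A ∧
          y ∈ (A ∩ G.obs) ∪ G.inducedUnobs A) a b → Relation.TransGen G.E a b := by
      intro a b h'
      induction h' with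
      | single hab => exact Relation.TransGen.single hab.1
      | tail _ hab ih => exact Relation.TransGen.tail ih hab.1
    exact key x x h)
  unobs_no_parent := fun u hu w hw =>
    G.unobs_no_parent u (Finset.mem_filter.mp hu).1 w hw.1
  unobs_two_children := by
    intro u hu
    have hu' := Finset.mem_filter.mp hu
    obtain ⟨a, b, hab, ha, hb, hiff⟩ := G.unobs_two_children u hu'.1
    have hEa : G.E u a := (hiff a).mpr (Or.inl rfl)
    have hEb : G.E u b := (hiff b).mpr (Or.inr rfl)
    have haA : a ∈ A := hu'.2 a hEa
    have hbA : b ∈ A := hu'.2 b hEb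
    refine ⟨a, b, hab, Finset.mem_inter.mpr ⟨haA, ha⟩, Finset.mem_inter.mpr ⟨hbA, hb⟩, ?_⟩
    intro w
    constructor
    · intro hw; exact (hiff w).mp hw.1
    · rintro (rfl | rfl)
      · exact ⟨hEa, Finset.mem_union.mpr (Or.inr hu),
          Finset.mem_union.mpr (Or.inl (Finset.mem_inter.mpr ⟨haA, ha⟩))⟩
      · exact ⟨hEb, Finset.mem_union.mpr (Or.inr hu),
          Finset.mem_union.mpr (Or.inl (Finset.mem_inter.mpr ⟨hbA, hb⟩))⟩

/-- `H` is a subgraph of `G`. -/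
def IsSubgraph (H G : CausalGraph ν) : Prop :=
  H.obs ⊆ G.obs ∧ H.unobs ⊆ G.unobs ∧ ∀ a b, H.E a b → G.E a b

/-- `H` is an `R`-rooted c-forest: `R` is the root set of `H`, the observed vertex set of
`H` is a single c-component, and every observed vertex has at most one child in `H`. -/
def IsCForest (H : CausalGraph ν) (R : Finset ν) : Prop :=
  H.obs.filter (fun x => ∀ w, ¬ H.E x w) = R ∧
  H.SingleC H.obs ∧
  ∀ x ∈ H.obs, ∀ w w', H.E x w → H.E x w' → w = w'

end CausalGraph


namespace Lemma9Aux

open CausalGraph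

/-- The noisy-copy kernel: copy `a` with probability 1/2, else uniform on `D`. -/
noncomputable def qf (D : Finset ℕ) (c a : ℕ) : ℝ :=
  if a ∈ D then (if c = a then 1/2 else 0) + 1/(2*(D.card : ℝ)) else 1/(D.card : ℝ)

lemma qf_pos {D : Finset ℕ} (hD : D.Nonempty) (c a : ℕ) : 0 < qf D c a := by
  have hk : (0:ℝ) < (D.card : ℝ) := by exact_mod_cast Finset.card_pos.mpr hD
  unfold qf
  split_ifs with h1 h2
  · have : (0:ℝ) < 1/(2*(D.card:ℝ)) := by positivity
    linarith
  · positivity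
  · positivity

lemma qf_sum {D : Finset ℕ} (hD : D.Nonempty) (a : ℕ) : ∑ c ∈ D, qf D c a = 1 := by
  have hk : (0:ℝ) < (D.card : ℝ) := by exact_mod_cast Finset.card_pos.mpr hD
  unfold qf
  by_cases ha : a ∈ D
  · simp only [if_pos ha, Finset.sum_add_distrib, Finset.sum_ite_eq' D a, if_pos ha,
      Finset.sum_const, nsmul_eq_mul]
    field_simp
    ring
  · simp only [if_neg ha, Finset.sum_const, nsmul_eq_mul]
    field_simp

lemma qf_eval {D : Finset ℕ} (c : ℕ) {a : ℕ} (ha : a ∈ D) :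
    qf D c a = (if c = a then 1/2 else 0) + 1/(2*(D.card : ℝ)) := if_pos ha

lemma mem_pair_image {A B : Finset ℕ} {n : ℕ}
    (h : n ∈ (A ×ˢ B).image (fun p => Nat.pair p.1 p.2)) :
    n.unpair.1 ∈ A ∧ n.unpair.2 ∈ B := by
  obtain ⟨p, hp, rfl⟩ := Finset.mem_image.mp h
  rw [Nat.unpair_pair]
  exact ⟨(Finset.mem_product.mp hp).1, (Finset.mem_product.mp hp).2⟩

lemma pair_mem_image {A B : Finset ℕ} {a b : ℕ} (ha : a ∈ A) (hb : b ∈ B) :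
    Nat.pair a b ∈ (A ×ˢ B).image (fun p => Nat.pair p.1 p.2) :=
  Finset.mem_image.mpr ⟨(a, b), Finset.mem_product.mpr ⟨ha, hb⟩, rfl⟩

variable {ν : Type} [Fintype ν] [DecidableEq ν]

/-- The augmented SEM over `G` obtained from an SEM over `G'` by letting `Y₂`
additionally carry a noisy copy of its parent `Y₁`. -/
noncomputable def aug (G G' : CausalGraph ν) (Y₁ Y₂ : ν)
    (hobs : G'.obs = G.obs) (hunobs : G'.unobs = G.unobs)
    (hE : ∀ a b, G'.E a b ↔ (G.E a b ∧ ¬(a = Y₁ ∧ b = Y₂)))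
    (he : G.E Y₁ Y₂) (M : SEM G') : SEM G where
  dom x := if x = Y₂ then (M.dom Y₂ ×ˢ M.dom Y₁).image (fun p => Nat.pair p.1 p.2)
           else M.dom x
  dom_ne x := by
    by_cases h : x = Y₂
    · simp only [if_pos h]
      exact ((M.dom_ne Y₂).product (M.dom_ne Y₁)).image _
    · simpa [h] using M.dom_ne x
  pU := M.pU
  pU_nonneg := M.pU_nonneg
  pU_sum u hu := by
    have huY₂ : u ≠ Y₂ := by
      rintro rfl
      exact G.unobs_no_parent u hu Y₁ he
    simp only [if_neg huY₂]
    exact M.pU_sum u (by rw [hunobs]; exact hu)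
  pO x n pa :=
    if x = Y₂ then M.pO Y₂ n.unpair.1 pa * qf (M.dom Y₁) n.unpair.2 (pa Y₁)
    else M.pO x n (Function.update pa Y₂ (pa Y₂).unpair.1)
  pO_nonneg x n pa := by
    by_cases h : x = Y₂
    · simp only [if_pos h]
      exact mul_nonneg (M.pO_nonneg _ _ _) (qf_pos (M.dom_ne Y₁) _ _).le
    · simp only [if_neg h]; exact M.pO_nonneg _ _ _
  pO_sum x hx pa := by
    by_cases h : x = Y₂
    · rw [h] at hx
      simp only [if_pos h]
      rw [Finset.sum_image (by
        intro p hp q hq hpq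
        obtain ⟨h1, h2⟩ := Nat.pair_eq_pair.mp hpq
        exact Prod.ext h1 h2)]
      simp only [Nat.unpair_pair]
      rw [Finset.sum_product]
      have : ∀ b ∈ M.dom Y₂,
          ∑ c ∈ M.dom Y₁, M.pO Y₂ b pa * qf (M.dom Y₁) c (pa Y₁) = M.pO Y₂ b pa := by
        intro b _
        rw [← Finset.mul_sum, qf_sum (M.dom_ne Y₁), mul_one]
      rw [Finset.sum_congr rfl this]
      exact M.pO_sum Y₂ (by rw [hobs]; exact hx) pa
      
    · simp only [if_neg h]
      exact M.pO_sum x (by rw [hobs]; exact hx) _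
  pO_par x n pa pa' h := by
    by_cases hx : x = Y₂
    · rw [hx] at h
      simp only [if_pos hx]
      rw [M.pO_par Y₂ n.unpair.1 pa pa' (fun p hp => h p ((hE p Y₂).mp hp).1), h Y₁ he]
    · simp only [if_neg hx]
      refine M.pO_par x n _ _ ?_
      intro p hp
      have hpG : G.E p x := ((hE p x).mp hp).1
      by_cases hpY : p = Y₂
      · subst hpY
        simp only [Function.update_self]
        rw [h p hpG]
      · rw [Function.update_of_ne hpY, Function.update_of_ne hpY]
        exact h p hpG


lemma mem_pair_iff {A B : Finset ℕ} {n : ℕ} :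
    n ∈ (A ×ˢ B).image (fun p => Nat.pair p.1 p.2) ↔ n.unpair.1 ∈ A ∧ n.unpair.2 ∈ B := by
  constructor
  · exact mem_pair_image
  · rintro ⟨h1, h2⟩
    have := pair_mem_image h1 h2
    rwa [Nat.pair_unpair] at this

lemma verts_eq (G G' : CausalGraph ν) (hobs : G'.obs = G.obs)
    (hunobs : G'.unobs = G.unobs) : G'.verts = G.verts := by
  unfold CausalGraph.verts; rw [hobs, hunobs]

section QAug

variable (G G' : CausalGraph ν) (Y₁ Y₂ : ν)
    (hobs : G'.obs = G.obs) (hunobs : G'.unobs = G.unobs)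
    (hE : ∀ a b, G'.E a b ↔ (G.E a b ∧ ¬(a = Y₁ ∧ b = Y₂)))
    (he : G.E Y₁ Y₂) (M : SEM G')

lemma Q_aug (hY₁o : Y₁ ∈ G.obs) (hY₂o : Y₂ ∈ G.obs) (S : Finset ν) (v : ν → ℕ)
    (hv : (v Y₂).unpair.1 ∈ M.dom Y₂ ∧ (v Y₂).unpair.2 ∈ M.dom Y₁) :
    (aug G G' Y₁ Y₂ hobs hunobs hE he M).Q S v =
      M.Q S (Function.update v Y₂ ((v Y₂).unpair.1)) *
        (if Y₂ ∈ S then qf (M.dom Y₁) (v Y₂).unpair.2 (v Y₁) else 1) := by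
  have hY₂v : Y₂ ∈ G.verts := Finset.mem_union_left _ hY₂o
  have hvts := verts_eq G G' hobs hunobs
  have hY₂u : Y₂ ∉ G.unobs := fun h => G.unobs_no_parent Y₂ h Y₁ he
  have hEY₂ : ¬ G'.E Y₂ Y₂ := fun h => G'.acyclic Y₂ (Relation.TransGen.single h)
  unfold SEM.Q
  rw [Finset.sum_mul]
  refine Finset.sum_bij' (fun w _ => Function.update w Y₂ ((w Y₂).unpair.1))
    (fun w _ => Function.update w Y₂ (v Y₂)) ?_ ?_ ?_ ?_ ?_
  · intro w hw
    rw [Finset.mem_filter] at hw ⊢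
    obtain ⟨hw1, hw2⟩ := hw
    simp only [SEM.fullAssign, Fintype.mem_piFinset, aug] at hw1
    constructor
    · simp only [SEM.fullAssign, Fintype.mem_piFinset]
      intro x
      rw [hvts]
      by_cases hx : x = Y₂
      · rw [hx, Function.update_self, if_pos hY₂v]
        have h2 := hw1 Y₂
        rw [if_pos hY₂v, if_pos rfl] at h2
        exact (mem_pair_iff.mp h2).1
      · rw [Function.update_of_ne hx]
        have h2 := hw1 x
        by_cases hxv : x ∈ G.verts
        · rw [if_pos hxv] at h2 ⊢
          rwa [if_neg hx] at h2
        · rw [if_neg hxv] at h2 ⊢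
          exact h2
    · intro x hx
      rw [hobs] at hx
      by_cases hxY : x = Y₂
      · rw [hxY, Function.update_self, Function.update_self, hw2 Y₂ hY₂o]
      · rw [Function.update_of_ne hxY, Function.update_of_ne hxY, hw2 x hx]
  · intro w hw
    rw [Finset.mem_filter] at hw ⊢
    obtain ⟨hw1, hw2⟩ := hw
    simp only [SEM.fullAssign, Fintype.mem_piFinset] at hw1
    constructor
    · simp only [SEM.fullAssign, Fintype.mem_piFinset, aug]
      intro x
      by_cases hx : x = Y₂
      · rw [hx, Function.update_self, if_pos hY₂v, if_pos rfl]
        rw [mem_pair_iff]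
        exact hv
      · rw [Function.update_of_ne hx]
        have h2 := hw1 x
        rw [hvts] at h2
        by_cases hxv : x ∈ G.verts
        · rw [if_pos hxv] at h2 ⊢
          rwa [if_neg hx]
        · rw [if_neg hxv] at h2 ⊢
          exact h2
    · intro x hx
      by_cases hxY : x = Y₂
      · rw [hxY, Function.update_self]
      · rw [Function.update_of_ne hxY]
        have h3 := hw2 x (by rw [hobs]; exact hx)
        rwa [Function.update_of_ne hxY] at h3
  · intro w hw
    rw [Finset.mem_filter] at hw
    funext z
    by_cases hz : z = Y₂
    · rw [hz]
      rw [Function.update_self, hw.2 Y₂ hY₂o]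
    · rw [Function.update_of_ne hz, Function.update_of_ne hz]
  · intro w hw
    rw [Finset.mem_filter] at hw
    funext z
    by_cases hz : z = Y₂
    · rw [hz]
      rw [Function.update_idem, Function.update_self, Function.update_self]
      have h3 := hw.2 Y₂ (by rw [hobs]; exact hY₂o)
      rw [Function.update_self] at h3
      exact h3.symm
    · rw [Function.update_idem, Function.update_of_ne hz]
  · intro w hw
    rw [Finset.mem_filter] at hw
    obtain ⟨hw1, hw2⟩ := hw
    have hwY₂ : w Y₂ = v Y₂ := hw2 Y₂ hY₂o
    have hwY₁ : w Y₁ = v Y₁ := hw2 Y₁ hY₁o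
    have hprod : ∏ x ∈ S, (aug G G' Y₁ Y₂ hobs hunobs hE he M).pO x (w x) w
        = (∏ x ∈ S, M.pO x (Function.update w Y₂ ((w Y₂).unpair.1) x)
            (Function.update w Y₂ ((w Y₂).unpair.1)))
          * (if Y₂ ∈ S then qf (M.dom Y₁) (v Y₂).unpair.2 (v Y₁) else 1) := by
      rw [← Finset.prod_ite_eq' S Y₂ (fun _ => qf (M.dom Y₁) (v Y₂).unpair.2 (v Y₁)),
        ← Finset.prod_mul_distrib]
      refine Finset.prod_congr rfl ?_
      intro x hx
      by_cases hxY : x = Y₂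
      · rw [hxY]
        simp only [aug, if_true, Function.update_self]
        rw [hwY₂, hwY₁]
        congr 1
        refine M.pO_par Y₂ _ _ _ ?_
        intro p hp
        have hpY : p ≠ Y₂ := fun h => hEY₂ (h ▸ hp)
        rw [Function.update_of_ne hpY]
      · simp only [aug, if_neg hxY]
        rw [Function.update_of_ne hxY, mul_one]
    rw [hprod]
    have hpu : ∏ u ∈ G.unobs,
          (aug G G' Y₁ Y₂ hobs hunobs hE he M).pU u (w u)
        = ∏ u ∈ G'.unobs, M.pU u (Function.update w Y₂ ((w Y₂).unpair.1) u) := by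
      rw [hunobs]
      refine Finset.prod_congr rfl ?_
      intro u hu
      have huY : u ≠ Y₂ := fun h => hY₂u (h ▸ hu)
      rw [Function.update_of_ne huY]
      rfl
    rw [hpu]
    ring

lemma mem_obsAssign_aug (hY₂o : Y₂ ∈ G.obs) (v : ν → ℕ)
    (hv : v ∈ (aug G G' Y₁ Y₂ hobs hunobs hE he M).obsAssign) :
    Function.update v Y₂ ((v Y₂).unpair.1) ∈ M.obsAssign ∧
      (v Y₂).unpair.1 ∈ M.dom Y₂ ∧ (v Y₂).unpair.2 ∈ M.dom Y₁ := by
  simp only [SEM.obsAssign, Fintype.mem_piFinset, aug] at hv ⊢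
  have h2 := hv Y₂
  rw [if_pos hY₂o, if_pos rfl, mem_pair_iff] at h2
  refine ⟨?_, h2⟩
  intro x
  rw [hobs]
  by_cases hx : x = Y₂
  · rw [hx, Function.update_self, if_pos hY₂o]
    exact h2.1
  · rw [Function.update_of_ne hx]
    have h3 := hv x
    by_cases hxo : x ∈ G.obs
    · rw [if_pos hxo] at h3 ⊢
      rwa [if_neg hx] at h3
    · rw [if_neg hxo] at h3 ⊢
      exact h3

lemma mem_obsAssign_aug' (hY₂o : Y₂ ∈ G.obs) (v : ν → ℕ) (hv : v ∈ M.obsAssign)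
    (c : ℕ) (hc : c ∈ M.dom Y₁) :
    Function.update v Y₂ (Nat.pair (v Y₂) c)
      ∈ (aug G G' Y₁ Y₂ hobs hunobs hE he M).obsAssign := by
  simp only [SEM.obsAssign, Fintype.mem_piFinset, aug] at hv ⊢
  intro x
  by_cases hx : x = Y₂
  · rw [hx, Function.update_self, if_pos hY₂o, if_pos rfl]
    have h2 := hv Y₂
    rw [if_pos (by rw [hobs]; exact hY₂o)] at h2
    exact pair_mem_image h2 hc
  · rw [Function.update_of_ne hx]
    have h3 := hv x
    rw [hobs] at h3
    by_cases hxo : x ∈ G.obs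
    · rw [if_pos hxo] at h3 ⊢
      rwa [if_neg hx]
    · rw [if_neg hxo] at h3 ⊢
      exact h3

lemma aug_pos (hY₁o : Y₁ ∈ G.obs) (hY₂o : Y₂ ∈ G.obs) (hMp : M.positive) :
    (aug G G' Y₁ Y₂ hobs hunobs hE he M).positive := by
  intro v hv
  obtain ⟨hmem, hv1, hv2⟩ := mem_obsAssign_aug G G' Y₁ Y₂ hobs hunobs hE he M hY₂o v hv
  have hq := Q_aug G G' Y₁ Y₂ hobs hunobs hE he M hY₁o hY₂o G.obs v ⟨hv1, hv2⟩
  unfold SEM.P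
  rw [hq, if_pos hY₂o]
  have hp := hMp _ hmem
  unfold SEM.P at hp
  rw [hobs] at hp
  exact mul_pos hp (qf_pos (M.dom_ne Y₁) _ _)

end QAug

lemma target_pred_iff (Y : Finset ν) (Y₁ : ν) (hY₁Y : Y₁ ∈ Y) (y : ν → ℕ) (c : ℕ)
    (v : ν → ℕ) :
    (∀ i ∈ Y, v i = Function.update y Y₁ c i) ↔
      ((∀ i ∈ Y.erase Y₁, v i = y i) ∧ v Y₁ = c) := by
  constructor
  · intro h
    refine ⟨fun i hi => ?_, ?_⟩
    · have h2 := h i (Finset.mem_of_mem_erase hi)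
      rwa [Function.update_of_ne (Finset.ne_of_mem_erase hi)] at h2
    · have h2 := h Y₁ hY₁Y
      rwa [Function.update_self] at h2
  · rintro ⟨h1, h2⟩ i hi
    by_cases hiY : i = Y₁
    · rw [hiY, Function.update_self]
      exact h2
    · rw [Function.update_of_ne hiY]
      exact h1 i (Finset.mem_erase.mpr ⟨hiY, hi⟩)

lemma Px_marg {H : CausalGraph ν} (M : SEM H) (X Y : Finset ν) (Y₁ : ν)
    (hY₁Y : Y₁ ∈ Y) (hY₁o : Y₁ ∈ H.obs) (x y : ν → ℕ) :
    ∑ c ∈ M.dom Y₁, M.Px X x Y (Function.update y Y₁ c)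
      = M.Px X x (Y.erase Y₁) y := by
  unfold SEM.Px
  have hmaps : ∀ v ∈ M.obsAssign.filter
      (fun v => (∀ i ∈ X, v i = x i) ∧ (∀ i ∈ Y.erase Y₁, v i = y i)),
      v Y₁ ∈ M.dom Y₁ := by
    intro v hv
    rw [Finset.mem_filter] at hv
    have h1 := hv.1
    simp only [SEM.obsAssign, Fintype.mem_piFinset] at h1
    have h2 := h1 Y₁
    rwa [if_pos hY₁o] at h2
  rw [← Finset.sum_fiberwise_of_maps_to hmaps (fun v => M.Q (H.obs \ X) v)]
  refine Finset.sum_congr rfl (fun c _ => ?_)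
  refine Finset.sum_congr ?_ (fun _ _ => rfl)
  rw [Finset.filter_filter]
  ext v
  simp only [Finset.mem_filter, and_assoc]
  rw [target_pred_iff Y Y₁ hY₁Y y c v]
  try tauto

section PxAug

variable (G G' : CausalGraph ν) (Y₁ Y₂ : ν)
    (hobs : G'.obs = G.obs) (hunobs : G'.unobs = G.unobs)
    (hE : ∀ a b, G'.E a b ↔ (G.E a b ∧ ¬(a = Y₁ ∧ b = Y₂)))
    (he : G.E Y₁ Y₂) (M : SEM G')

lemma Px_aug (hY₁o : Y₁ ∈ G.obs) (hY₂o : Y₂ ∈ G.obs)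
    (X Y : Finset ν) (hY₁Y : Y₁ ∈ Y) (hY₂e : Y₂ ∈ Y.erase Y₁) (hY₂X : Y₂ ∉ X)
    (hY₁Y₂ : Y₁ ≠ Y₂)
    (x y : ν → ℕ) (c₀ : ℕ) (hc₀ : c₀ ∈ M.dom Y₁) (hy₂ : y Y₂ ∈ M.dom Y₂) :
    (aug G G' Y₁ Y₂ hobs hunobs hE he M).Px X x (Y.erase Y₁)
        (Function.update y Y₂ (Nat.pair (y Y₂) c₀)) =
      (1/2) * M.Px X x Y (Function.update y Y₁ c₀)
        + (1/(2*((M.dom Y₁).card : ℝ))) * M.Px X x (Y.erase Y₁) y := by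
  have hY₂Y₂ : Y₂ ∈ G.obs \ X := Finset.mem_sdiff.mpr ⟨hY₂o, hY₂X⟩
  set T := M.obsAssign.filter
    (fun v => (∀ i ∈ X, v i = x i) ∧ (∀ i ∈ Y.erase Y₁, v i = y i)) with hT
  have step1 : (aug G G' Y₁ Y₂ hobs hunobs hE he M).Px X x (Y.erase Y₁)
      (Function.update y Y₂ (Nat.pair (y Y₂) c₀))
      = ∑ v ∈ T, M.Q (G.obs \ X) v * qf (M.dom Y₁) c₀ (v Y₁) := by
    unfold SEM.Px
    refine Finset.sum_bij' (fun v _ => Function.update v Y₂ ((v Y₂).unpair.1))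
      (fun v _ => Function.update v Y₂ (Nat.pair (y Y₂) c₀)) ?_ ?_ ?_ ?_ ?_
    · intro v hv
      rw [Finset.mem_filter] at hv ⊢
      obtain ⟨hv1, hv2, hv3⟩ := hv
      have hvY₂ : v Y₂ = Nat.pair (y Y₂) c₀ := by
        have h4 := hv3 Y₂ hY₂e
        rwa [Function.update_self] at h4
      refine ⟨(mem_obsAssign_aug G G' Y₁ Y₂ hobs hunobs hE he M hY₂o v hv1).1,
        ?_, ?_⟩
      · intro i hi
        have hiY : i ≠ Y₂ := fun h => hY₂X (h ▸ hi)
        rw [Function.update_of_ne hiY]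
        exact hv2 i hi
      · intro i hi
        by_cases hiY : i = Y₂
        · rw [hiY, Function.update_self, hvY₂, Nat.unpair_pair]
        · rw [Function.update_of_ne hiY]
          have h4 := hv3 i hi
          rwa [Function.update_of_ne hiY] at h4
    · intro v hv
      rw [Finset.mem_filter] at hv ⊢
      obtain ⟨hv1, hv2, hv3⟩ := hv
      have hvY₂ : v Y₂ = y Y₂ := hv3 Y₂ hY₂e
      refine ⟨?_, ?_, ?_⟩
      · rw [← hvY₂]
        exact mem_obsAssign_aug' G G' Y₁ Y₂ hobs hunobs hE he M hY₂o v hv1 c₀ hc₀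
      · intro i hi
        have hiY : i ≠ Y₂ := fun h => hY₂X (h ▸ hi)
        rw [Function.update_of_ne hiY]
        exact hv2 i hi
      · intro i hi
        by_cases hiY : i = Y₂
        · rw [hiY, Function.update_self, Function.update_self]
        · rw [Function.update_of_ne hiY, Function.update_of_ne hiY]
          exact hv3 i hi
    · intro v hv
      rw [Finset.mem_filter] at hv
      have hvY₂ : v Y₂ = Nat.pair (y Y₂) c₀ := by
        have h4 := hv.2.2 Y₂ hY₂e
        rwa [Function.update_self] at h4
      funext z
      by_cases hz : z = Y₂
      · rw [hz]
        rw [Function.update_idem, Function.update_self, hvY₂]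
      · rw [Function.update_idem, Function.update_of_ne hz]
    · intro v hv
      rw [Finset.mem_filter] at hv
      have hvY₂ : v Y₂ = y Y₂ := hv.2.2 Y₂ hY₂e
      funext z
      by_cases hz : z = Y₂
      · rw [hz]
        rw [Function.update_idem, Function.update_self, Function.update_self,
          Nat.unpair_pair, hvY₂]
      · rw [Function.update_idem, Function.update_of_ne hz]
    · intro v hv
      rw [Finset.mem_filter] at hv
      obtain ⟨hv1, hv2, hv3⟩ := hv
      have hvY₂ : v Y₂ = Nat.pair (y Y₂) c₀ := by
        have h4 := hv3 Y₂ hY₂e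
        rwa [Function.update_self] at h4
      obtain ⟨hmem, hu1, hu2⟩ :=
        mem_obsAssign_aug G G' Y₁ Y₂ hobs hunobs hE he M hY₂o v hv1
      rw [Q_aug G G' Y₁ Y₂ hobs hunobs hE he M hY₁o hY₂o (G.obs \ X) v ⟨hu1, hu2⟩,
        if_pos hY₂Y₂]
      congr 1
      simp [hvY₂, Nat.unpair_pair, Function.update_of_ne hY₁Y₂]
  rw [step1]
  have hk : (0:ℝ) < ((M.dom Y₁).card : ℝ) := by
    exact_mod_cast Finset.card_pos.mpr (M.dom_ne Y₁)
  have hmemD : ∀ v ∈ T, v Y₁ ∈ M.dom Y₁ := by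
    intro v hv
    rw [hT, Finset.mem_filter] at hv
    have h1 := hv.1
    simp only [SEM.obsAssign, Fintype.mem_piFinset] at h1
    have h2 := h1 Y₁
    rwa [if_pos (by rw [hobs]; exact hY₁o)] at h2
  have step2 : ∑ v ∈ T, M.Q (G.obs \ X) v * qf (M.dom Y₁) c₀ (v Y₁)
      = (1/2) * ∑ v ∈ T.filter (fun v => v Y₁ = c₀), M.Q (G.obs \ X) v
        + (1/(2*((M.dom Y₁).card : ℝ))) * ∑ v ∈ T, M.Q (G.obs \ X) v := by
    have hptwise : ∀ v ∈ T, M.Q (G.obs \ X) v * qf (M.dom Y₁) c₀ (v Y₁)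
        = (1/2) * (if v Y₁ = c₀ then M.Q (G.obs \ X) v else 0)
          + (1/(2*((M.dom Y₁).card : ℝ))) * M.Q (G.obs \ X) v := by
      intro v hv
      rw [qf_eval c₀ (hmemD v hv)]
      by_cases hvc : v Y₁ = c₀
      · rw [if_pos hvc, if_pos hvc.symm]
        ring
      · rw [if_neg hvc, if_neg (fun h => hvc h.symm)]
        ring
    rw [Finset.sum_congr rfl hptwise, Finset.sum_add_distrib, ← Finset.mul_sum,
      ← Finset.mul_sum, ← Finset.sum_filter]
  rw [step2]
  have hC : ∑ v ∈ T, M.Q (G.obs \ X) v = M.Px X x (Y.erase Y₁) y := by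
    unfold SEM.Px
    rw [hobs]
  have hF : ∑ v ∈ T.filter (fun v => v Y₁ = c₀), M.Q (G.obs \ X) v
      = M.Px X x Y (Function.update y Y₁ c₀) := by
    unfold SEM.Px
    rw [hobs, hT, Finset.filter_filter]
    refine Finset.sum_congr ?_ (fun _ _ => rfl)
    ext v
    simp only [Finset.mem_filter, and_assoc]
    rw [target_pred_iff Y Y₁ hY₁Y y c₀ v]
    try tauto
  rw [hC, hF]

end PxAug

end Lemma9Aux

/-- Lemma 9. If removing a directed edge `(Y₁, Y₂)` with
`Y₁, Y₂ ∈ Y` makes the causal effect of `X` on `Y` non-g-identifiable, then the causal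
effect of `X` on `Y ∖ {Y₁}` is not g-identifiable from the original graph. -/
theorem not_gid_erase_of_not_gid_delete_edge
    {ν : Type} [Fintype ν] [DecidableEq ν] (G G' : CausalGraph ν)
    (𝔸 : Finset (Finset ν)) (h𝔸 : ∀ A ∈ 𝔸, A ⊆ G.obs)
    (X Y : Finset ν) (hX : X ⊆ G.obs) (hY : Y ⊆ G.obs) (hXY : Disjoint X Y)
    (Y₁ Y₂ : ν) (hY₁ : Y₁ ∈ Y) (hY₂ : Y₂ ∈ Y) (he : G.E Y₁ Y₂)
    (hobs : G'.obs = G.obs) (hunobs : G'.unobs = G.unobs)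
    (hE : ∀ a b, G'.E a b ↔ (G.E a b ∧ ¬(a = Y₁ ∧ b = Y₂))) :
    ¬ G'.GIdentifiable 𝔸 X Y → ¬ G.GIdentifiable 𝔸 X (Y.erase Y₁) := by
  intro hng' hgid
  unfold CausalGraph.GIdentifiable at hng'
  push_neg at hng'
  obtain ⟨M₁, M₂, h1p, h2p, hdom, hQ, x, y, hx, hy, hne⟩ := hng'
  have hY₁o : Y₁ ∈ G.obs := hY hY₁
  have hY₂o : Y₂ ∈ G.obs := hY hY₂
  have hY₁Y₂ : Y₁ ≠ Y₂ := by
    rintro rfl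
    exact G.acyclic Y₁ (Relation.TransGen.single he)
  have hY₂e : Y₂ ∈ Y.erase Y₁ := Finset.mem_erase.mpr ⟨Ne.symm hY₁Y₂, hY₂⟩
  have hY₂X : Y₂ ∉ X := Finset.disjoint_right.mp hXY hY₂
  set A₁ := Lemma9Aux.aug G G' Y₁ Y₂ hobs hunobs hE he M₁ with hA₁
  set A₂ := Lemma9Aux.aug G G' Y₁ Y₂ hobs hunobs hE he M₂ with hA₂
  have hY₁o' : Y₁ ∈ G'.obs := by rw [hobs]; exact hY₁o
  have hY₂o' : Y₂ ∈ G'.obs := by rw [hobs]; exact hY₂o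
  have hdomY₁ : M₁.dom Y₁ = M₂.dom Y₁ := hdom Y₁ hY₁o'
  have hdomY₂ : M₁.dom Y₂ = M₂.dom Y₂ := hdom Y₂ hY₂o'
  have hdom' : ∀ i ∈ G.obs, A₁.dom i = A₂.dom i := by
    intro i hi
    simp only [hA₁, hA₂, Lemma9Aux.aug]
    by_cases hiY : i = Y₂
    · rw [if_pos hiY, if_pos hiY, hdomY₁, hdomY₂]
    · rw [if_neg hiY, if_neg hiY]
      exact hdom i (by rw [hobs]; exact hi)
  have hQ' : ∀ A ∈ 𝔸, ∀ v ∈ A₁.obsAssign, A₁.Q A v = A₂.Q A v := by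
    intro A hA v hv
    obtain ⟨hmem, hu1, hu2⟩ :=
      Lemma9Aux.mem_obsAssign_aug G G' Y₁ Y₂ hobs hunobs hE he M₁ hY₂o v hv
    rw [hA₁, hA₂,
      Lemma9Aux.Q_aug G G' Y₁ Y₂ hobs hunobs hE he M₁ hY₁o hY₂o A v ⟨hu1, hu2⟩,
      Lemma9Aux.Q_aug G G' Y₁ Y₂ hobs hunobs hE he M₂ hY₁o hY₂o A v
        ⟨hdomY₂ ▸ hu1, hdomY₁ ▸ hu2⟩,
      hQ A hA _ hmem, hdomY₁]
  have h1pos : A₁.positive :=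
    Lemma9Aux.aug_pos G G' Y₁ Y₂ hobs hunobs hE he M₁ hY₁o hY₂o h1p
  have h2pos : A₂.positive :=
    Lemma9Aux.aug_pos G G' Y₁ Y₂ hobs hunobs hE he M₂ hY₁o hY₂o h2p
  have key : ∀ c₀ ∈ M₁.dom Y₁,
      (1/2) * M₁.Px X x Y (Function.update y Y₁ c₀)
        + (1/(2*((M₁.dom Y₁).card : ℝ))) * M₁.Px X x (Y.erase Y₁) y
      = (1/2) * M₂.Px X x Y (Function.update y Y₁ c₀)
        + (1/(2*((M₁.dom Y₁).card : ℝ))) * M₂.Px X x (Y.erase Y₁) y := by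
    intro c₀ hc₀
    have h1 := Lemma9Aux.Px_aug G G' Y₁ Y₂ hobs hunobs hE he M₁ hY₁o hY₂o X Y
      hY₁ hY₂e hY₂X hY₁Y₂ x y c₀ hc₀ (hy Y₂ hY₂)
    have h2 := Lemma9Aux.Px_aug G G' Y₁ Y₂ hobs hunobs hE he M₂ hY₁o hY₂o X Y
      hY₁ hY₂e hY₂X hY₁Y₂ x y c₀ (hdomY₁ ▸ hc₀) (hdomY₂ ▸ hy Y₂ hY₂)
    rw [← hdomY₁] at h2
    have hx' : ∀ i ∈ X, x i ∈ A₁.dom i := by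
      intro i hi
      have hiY : i ≠ Y₂ := fun h => hY₂X (h ▸ hi)
      simp only [hA₁, Lemma9Aux.aug]
      rw [if_neg hiY]
      exact hx i hi
    have hy' : ∀ i ∈ Y.erase Y₁,
        Function.update y Y₂ (Nat.pair (y Y₂) c₀) i ∈ A₁.dom i := by
      intro i hi
      by_cases hiY : i = Y₂
      · rw [hiY, Function.update_self]
        simp only [hA₁, Lemma9Aux.aug, if_true]
        exact Lemma9Aux.pair_mem_image (hy Y₂ hY₂) hc₀
      · rw [Function.update_of_ne hiY]
        simp only [hA₁, Lemma9Aux.aug]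
        rw [if_neg hiY]
        exact hy i (Finset.mem_of_mem_erase hi)
    have heq := hgid A₁ A₂ h1pos h2pos hdom' hQ' x
      (Function.update y Y₂ (Nat.pair (y Y₂) c₀)) hx' hy'
    rw [hA₁, h1, hA₂, h2] at heq
    exact heq
  have hkpos : (0:ℝ) < ((M₁.dom Y₁).card : ℝ) := by
    exact_mod_cast Finset.card_pos.mpr (M₁.dom_ne Y₁)
  have hm₁ := Lemma9Aux.Px_marg M₁ X Y Y₁ hY₁ hY₁o' x y
  have hm₂ := Lemma9Aux.Px_marg M₂ X Y Y₁ hY₁ hY₁o' x y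
  rw [← hdomY₁] at hm₂
  have hL : ∑ c₀ ∈ M₁.dom Y₁,
      ((1/2) * M₁.Px X x Y (Function.update y Y₁ c₀)
        + (1/(2*((M₁.dom Y₁).card : ℝ))) * M₁.Px X x (Y.erase Y₁) y)
      = M₁.Px X x (Y.erase Y₁) y := by
    rw [Finset.sum_add_distrib, ← Finset.mul_sum, hm₁, Finset.sum_const, nsmul_eq_mul]
    field_simp
    ring
  have hR : ∑ c₀ ∈ M₁.dom Y₁,
      ((1/2) * M₂.Px X x Y (Function.update y Y₁ c₀)
        + (1/(2*((M₁.dom Y₁).card : ℝ))) * M₂.Px X x (Y.erase Y₁) y)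
      = M₂.Px X x (Y.erase Y₁) y := by
    rw [Finset.sum_add_distrib, ← Finset.mul_sum, hm₂, Finset.sum_const, nsmul_eq_mul]
    field_simp
    ring
  have hCC : M₁.Px X x (Y.erase Y₁) y = M₂.Px X x (Y.erase Y₁) y := by
    rw [← hL, ← hR]
    exact Finset.sum_congr rfl key
  have hy₁D : y Y₁ ∈ M₁.dom Y₁ := hy Y₁ hY₁
  have hk2 := key (y Y₁) hy₁D
  rw [hCC] at hk2
  have hFF : M₁.Px X x Y (Function.update y Y₁ (y Y₁))
      = M₂.Px X x Y (Function.update y Y₁ (y Y₁)) := by linarith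
  rw [Function.update_eq_self] at hFF
  exact hne hFF
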